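/- Let H be a complex Hilbert space, let k and m be positive integers, and let S be a positive Hilbert–Schmidt operator on H of rank at most k. Let A = Σ_{i=1}^{N} γᵢ·rᵢ^{-1/2}·Qᵢ, where γᵢ ≥ 0, the Qᵢ are orthogonal projections of finite rank rᵢ = Tr(Qᵢ) with rᵢ ≥ m, and QᵢQⱼ = 0 for i ≠ j. Then the Hilbert–Schmidt inner product satisfies ⟨S, A⟩ ≤ √(k/m) · ‖S‖₂ · ‖A‖₂, where ‖·‖₂ is the Hilbert–Schmidt norm (note ‖A‖₂² = Σᵢ γᵢ²). -/

import Mathlib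

open scoped ComplexConjugate

local notation "⟪" x ", " y "⟫" => @inner ℂ _ _ x y

theorem parseval_sq' {H : Type*} [NormedAddCommGroup H] [InnerProductSpace ℂ H]
    {ι : Type*} (e : HilbertBasis ι ℂ H) (x : H) :
    HasSum (fun j => ‖(⟪e j, x⟫ : ℂ)‖ ^ 2) (‖x‖ ^ 2) := by
  have h := (e.hasSum_inner_mul_inner x x).mapL Complex.reCLM
  have h2 : Complex.reCLM (⟪x, x⟫ : ℂ) = ‖x‖ ^ 2 := inner_self_eq_norm_sq (𝕜 := ℂ) x
  rw [h2] at h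
  have h3 : ∀ j, Complex.reCLM ((⟪x, e j⟫ : ℂ) * ⟪e j, x⟫) = ‖(⟪e j, x⟫ : ℂ)‖ ^ 2 := by
    intro j
    rw [← inner_conj_symm x (e j)]
    set c : ℂ := ⟪e j, x⟫
    simp [Complex.mul_re, Complex.sq_norm, Complex.normSq_apply]
  simpa only [h3] using h

/-- Let `S` be a positive Hilbert–Schmidt operator of rank at most `k` on a
complex Hilbert space `H`, and let `A = Σᵢ γᵢ·rᵢ^{-1/2}·Qᵢ` where the `Qᵢ` are pairwise
orthogonal finite-rank orthogonal projections with `rᵢ = Tr(Qᵢ) = rank(Qᵢ) ≥ m` and `γᵢ ≥ 0`.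
Then `⟨S, A⟩ ≤ √(k/m)·‖S‖₂·‖A‖₂`, where the Hilbert–Schmidt inner product and norm are
computed with respect to a Hilbert basis `e`, and `‖A‖₂² = Σᵢ γᵢ²`. -/
theorem hilbert_schmidt_pairing_bound {H : Type*} [NormedAddCommGroup H]
    [InnerProductSpace ℂ H] [CompleteSpace H]
    {ι : Type*} (e : HilbertBasis ι ℂ H)
    (k m : ℕ) (hk : 0 < k) (hm : 0 < m)
    (S : H →L[ℂ] H) (hSpos : S.IsPositive)
    (hSrank : Module.rank ℂ (LinearMap.range (S : H →ₗ[ℂ] H)) ≤ k)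
    (N : ℕ) (γ : Fin N → ℝ) (hγ : ∀ i, 0 ≤ γ i)
    (Q : Fin N → H →L[ℂ] H)
    (hQsa : ∀ i, IsSelfAdjoint (Q i))
    (hQidem : ∀ i, Q i ∘L Q i = Q i)
    (hQorth : ∀ i j, i ≠ j → Q i ∘L Q j = 0)
    (r : Fin N → ℕ)
    (hQrank : ∀ i, Module.rank ℂ (LinearMap.range ((Q i) : H →ₗ[ℂ] H)) = r i)
    (hrm : ∀ i, m ≤ r i)
    (A : H →L[ℂ] H)
    (hA : A = ∑ i : Fin N, ((γ i / Real.sqrt (r i) : ℝ) : ℂ) • Q i) :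
    (∑' j : ι, (inner ℂ (S (e j)) (A (e j)) : ℂ)).re ≤
      Real.sqrt ((k : ℝ) / (m : ℝ)) * Real.sqrt (∑' j : ι, ‖S (e j)‖ ^ 2) *
        Real.sqrt (∑ i : Fin N, γ i ^ 2) := by
  classical
  have hS : IsSelfAdjoint S := hSpos.isSelfAdjoint
  have hSsym : ∀ x y : H, (⟪S x, y⟫ : ℂ) = ⟪x, S y⟫ :=
    ContinuousLinearMap.isSelfAdjoint_iff_isSymmetric.mp hS
  have hQsym : ∀ i, ∀ x y : H, (⟪Q i x, y⟫ : ℂ) = ⟪x, Q i y⟫ := fun i =>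
    ContinuousLinearMap.isSelfAdjoint_iff_isSymmetric.mp (hQsa i)
  set V := LinearMap.range (S : H →ₗ[ℂ] H) with hVdef
  haveI hfin : FiniteDimensional ℂ V :=
    Module.rank_lt_aleph0_iff.mp (lt_of_le_of_lt hSrank (Cardinal.nat_lt_aleph0 k))
  set n := Module.finrank ℂ V with hndef
  have hnk : (n : ℝ) ≤ (k : ℝ) := by
    exact_mod_cast Module.finrank_le_of_rank_le hSrank
  set b := stdOrthonormalBasis ℂ V with hbdef
  set u : Fin n → H := fun l => (b l : H) with hudef
  have hu_mem : ∀ l, u l ∈ V := fun l => (b l).2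
  have hu_norm : ∀ l, ‖u l‖ = 1 := fun l => b.orthonormal.1 l
  -- expansion of vectors of V
  have hexp : ∀ v : H, v ∈ V → v = ∑ l, (⟪u l, v⟫ : ℂ) • u l := by
    intro v hv
    have h := b.sum_repr ⟨v, hv⟩
    have h2 : ∀ l, b.repr ⟨v, hv⟩ l = (⟪u l, v⟫ : ℂ) := fun l => by
      rw [b.repr_apply_apply]; rfl
    calc v = ((∑ l, b.repr ⟨v, hv⟩ l • b l : V) : H) := by rw [h]
      _ = ∑ l, (⟪u l, v⟫ : ℂ) • u l := by
          rw [Submodule.coe_sum]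
          exact Finset.sum_congr rfl fun l _ => by rw [h2, Submodule.coe_smul]
  -- norm expansion
  have hnorm : ∀ v : H, v ∈ V → ‖v‖ ^ 2 = ∑ l, ‖(⟪u l, v⟫ : ℂ)‖ ^ 2 := by
    intro v hv
    have h1 : ‖(⟨v, hv⟩ : V)‖ = ‖b.repr ⟨v, hv⟩‖ := (b.repr.norm_map _).symm
    rw [EuclideanSpace.norm_eq] at h1
    have h2 : ∀ l, ‖b.repr ⟨v, hv⟩ l‖ = ‖(⟪u l, v⟫ : ℂ)‖ := fun l => by
      rw [b.repr_apply_apply]; rfl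
    have h3 : ‖v‖ = Real.sqrt (∑ l, ‖(⟪u l, v⟫ : ℂ)‖ ^ 2) := by
      simpa [h2] using h1
    rw [h3, Real.sq_sqrt (Finset.sum_nonneg fun l _ => sq_nonneg _)]
  have hSeV : ∀ x : H, S x ∈ V := fun x => LinearMap.mem_range_self _ x
  -- Hilbert-Schmidt norm of S as finite sum
  have hHS : HasSum (fun j : ι => ‖S (e j)‖ ^ 2) (∑ l, ‖S (u l)‖ ^ 2) := by
    have hterm : ∀ j, ‖S (e j)‖ ^ 2 = ∑ l, ‖(⟪e j, S (u l)⟫ : ℂ)‖ ^ 2 := by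
      intro j
      rw [hnorm _ (hSeV (e j))]
      refine Finset.sum_congr rfl fun l _ => ?_
      rw [show (⟪u l, S (e j)⟫ : ℂ) = ⟪S (u l), e j⟫ from (hSsym (u l) (e j)).symm,
        ← norm_inner_symm]
    have h := hasSum_sum (f := fun l (j : ι) => ‖(⟪e j, S (u l)⟫ : ℂ)‖ ^ 2)
      (s := Finset.univ) (fun l _ => parseval_sq' e (S (u l)))
    exact HasSum.congr_fun h fun j => hterm j
  have htsumS : ∑' j : ι, ‖S (e j)‖ ^ 2 = ∑ l, ‖S (u l)‖ ^ 2 := hHS.tsum_eq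
  -- main trace identity
  set T : H →L[ℂ] H := S ∘L A with hTdef
  have hTeV : ∀ x, T x ∈ V := fun x => LinearMap.mem_range_self _ _
  have hmain : HasSum (fun j : ι => (⟪S (e j), A (e j)⟫ : ℂ))
      (∑ l, (⟪S (u l), A (u l)⟫ : ℂ)) := by
    have hterm : ∀ j, (⟪S (e j), A (e j)⟫ : ℂ)
        = ∑ l, ((⟪(ContinuousLinearMap.adjoint T) (u l), e j⟫ : ℂ) * ⟪e j, u l⟫) := by
      intro j
      rw [hSsym (e j) (A (e j))]
      have : S (A (e j)) = T (e j) := rfl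
      rw [this]
      conv_lhs => rw [hexp _ (hTeV (e j))]
      rw [inner_sum]
      refine Finset.sum_congr rfl fun l _ => ?_
      rw [inner_smul_right, ContinuousLinearMap.adjoint_inner_left, mul_comm]
    have hval : ∀ l, (⟪(ContinuousLinearMap.adjoint T) (u l), u l⟫ : ℂ)
        = ⟪S (u l), A (u l)⟫ := by
      intro l
      rw [ContinuousLinearMap.adjoint_inner_left]
      have : T (u l) = S (A (u l)) := rfl
      rw [this, ← hSsym (u l) (A (u l))]
    have h := hasSum_sum
      (f := fun l (j : ι) => ((⟪(ContinuousLinearMap.adjoint T) (u l), e j⟫ : ℂ) * ⟪e j, u l⟫))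
      (s := Finset.univ)
      (fun l _ => e.hasSum_inner_mul_inner ((ContinuousLinearMap.adjoint T) (u l)) (u l))
    rw [Finset.sum_congr rfl fun l _ => hval l] at h
    exact HasSum.congr_fun h fun j => hterm j
  -- trace against each Q i
  set t : Fin N → ℝ := fun i => ∑ l, ((⟪S (u l), Q i (u l)⟫ : ℂ)).re with htdef
  set g : Fin N → ℝ := fun i => Real.sqrt (∑ l, ‖Q i (S (u l))‖ ^ 2) with hgdef
  have hg0 : ∀ i, 0 ≤ g i := fun i => Real.sqrt_nonneg _
  have hlhs : (∑' j : ι, (⟪S (e j), A (e j)⟫ : ℂ)).re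
      = ∑ i, (γ i / Real.sqrt (r i)) * t i := by
    rw [hmain.tsum_eq, Complex.re_sum]
    have hAu : ∀ l, ((⟪S (u l), A (u l)⟫ : ℂ)).re
        = ∑ i, (γ i / Real.sqrt (r i)) * ((⟪S (u l), Q i (u l)⟫ : ℂ)).re := by
      intro l
      rw [hA]
      simp only [ContinuousLinearMap.sum_apply, ContinuousLinearMap.coe_smul',
        Pi.smul_apply, inner_sum, inner_smul_right, Complex.re_sum]
      exact Finset.sum_congr rfl fun i _ => by
        rw [Complex.re_ofReal_mul]
    rw [Finset.sum_congr rfl fun l _ => hAu l, Finset.sum_comm]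
    exact Finset.sum_congr rfl fun i _ => by rw [htdef, Finset.mul_sum]
  -- bound on t i
  have hti : ∀ i, t i ≤ Real.sqrt k * g i := by
    intro i
    have h1 : ∀ l, ((⟪S (u l), Q i (u l)⟫ : ℂ)).re ≤ ‖Q i (S (u l))‖ := by
      intro l
      rw [← hQsym i (S (u l)) (u l)]
      calc ((⟪Q i (S (u l)), u l⟫ : ℂ)).re ≤ ‖(⟪Q i (S (u l)), u l⟫ : ℂ)‖ :=
            Complex.re_le_norm _
        _ ≤ ‖Q i (S (u l))‖ * ‖u l‖ := norm_inner_le_norm _ _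
        _ = ‖Q i (S (u l))‖ := by rw [hu_norm l, mul_one]
    calc t i ≤ ∑ l, ‖Q i (S (u l))‖ := Finset.sum_le_sum fun l _ => h1 l
      _ = ∑ l, ‖Q i (S (u l))‖ * 1 := by simp
      _ ≤ Real.sqrt (∑ l, ‖Q i (S (u l))‖ ^ 2) * Real.sqrt (∑ _l : Fin n, (1 : ℝ) ^ 2) :=
          Real.sum_mul_le_sqrt_mul_sqrt _ _ _
      _ = g i * Real.sqrt n := by
          rw [hgdef]; norm_num
      _ ≤ g i * Real.sqrt k := by
          gcongr
      _ = Real.sqrt k * g i := mul_comm _ _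
  -- orthogonality estimate
  have hQQ : ∀ i (x : H), (⟪Q i x, x⟫ : ℂ) = ((‖Q i x‖ ^ 2 : ℝ) : ℂ) := by
    intro i x
    conv_lhs => rw [show Q i x = (Q i ∘L Q i) x from by rw [hQidem i]]
    rw [ContinuousLinearMap.comp_apply, hQsym i (Q i x) x, inner_self_eq_norm_sq_to_K]
    norm_cast
  have horth : ∀ x : H, ∑ i, ‖Q i x‖ ^ 2 ≤ ‖x‖ ^ 2 := by
    intro x
    set P : H →L[ℂ] H := ∑ i, Q i with hPdef
    set s : ℝ := ∑ i, ‖Q i x‖ ^ 2 with hsdef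
    have hs0 : 0 ≤ s := Finset.sum_nonneg fun i _ => sq_nonneg _
    have hcross : ∀ i j, j ≠ i → (⟪Q i x, Q j x⟫ : ℂ) = 0 := by
      intro i j hij
      rw [← hQsym j (Q i x) x]
      have hz : Q j (Q i x) = 0 := by
        have := congrArg (fun M : H →L[ℂ] H => M x) (hQorth j i hij)
        simpa using this
      rw [hz, inner_zero_left]
    have hPx : (⟪P x, x⟫ : ℂ) = ((s : ℝ) : ℂ) := by
      rw [hPdef]
      simp only [ContinuousLinearMap.sum_apply, sum_inner]
      rw [Finset.sum_congr rfl fun i _ => hQQ i x, hsdef]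
      norm_cast
    have hPP : (⟪P x, P x⟫ : ℂ) = ((s : ℝ) : ℂ) := by
      rw [hPdef]
      simp only [ContinuousLinearMap.sum_apply, sum_inner, inner_sum]
      have hdiag : ∀ i, ∑ j, (⟪Q i x, Q j x⟫ : ℂ) = ((‖Q i x‖ ^ 2 : ℝ) : ℂ) := by
        intro i
        rw [Finset.sum_eq_single i (fun j _ hj => hcross i j hj) (by simp)]
        rw [inner_self_eq_norm_sq_to_K]
        norm_cast
      rw [Finset.sum_comm, Finset.sum_congr rfl fun i _ => hdiag i, hsdef]
      norm_cast
    have hnPx : ‖P x‖ ^ 2 = s := by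
      have := inner_self_eq_norm_sq (𝕜 := ℂ) (P x)
      rw [hPP] at this
      simpa using this.symm
    have hle : s ≤ ‖P x‖ * ‖x‖ := by
      have h1 : s ≤ ‖(⟪P x, x⟫ : ℂ)‖ := by
        rw [hPx]
        simpa using le_abs_self s
      exact h1.trans (norm_inner_le_norm _ _)
    nlinarith [norm_nonneg (P x), norm_nonneg x, sq_nonneg (‖P x‖ - ‖x‖)]
  have hgsum : ∑ i, g i ^ 2 ≤ ∑ l, ‖S (u l)‖ ^ 2 := by
    have hg2 : ∀ i, g i ^ 2 = ∑ l, ‖Q i (S (u l))‖ ^ 2 := fun i =>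
      Real.sq_sqrt (Finset.sum_nonneg fun l _ => sq_nonneg _)
    rw [Finset.sum_congr rfl fun i _ => hg2 i, Finset.sum_comm]
    exact Finset.sum_le_sum fun l _ => horth (S (u l))
  -- per-index bound
  have hm1 : (1 : ℝ) ≤ (m : ℝ) := by exact_mod_cast hm
  have hsm : 0 < Real.sqrt m := Real.sqrt_pos.mpr (by linarith)
  have hper : ∀ i, (γ i / Real.sqrt (r i)) * t i
      ≤ (Real.sqrt k / Real.sqrt m) * (γ i * g i) := by
    intro i
    rcases le_or_gt (t i) 0 with h | h
    · have h1 : (γ i / Real.sqrt (r i)) * t i ≤ 0 :=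
        mul_nonpos_of_nonneg_of_nonpos (div_nonneg (hγ i) (Real.sqrt_nonneg _)) h
      have h2 : 0 ≤ (Real.sqrt k / Real.sqrt m) * (γ i * g i) :=
        mul_nonneg (div_nonneg (Real.sqrt_nonneg _) (Real.sqrt_nonneg _))
          (mul_nonneg (hγ i) (hg0 i))
      linarith
    · have h1 : t i ≤ Real.sqrt k * g i := hti i
      have hrm' : Real.sqrt m ≤ Real.sqrt (r i) := by
        apply Real.sqrt_le_sqrt
        exact_mod_cast hrm i
      have h2 : γ i / Real.sqrt (r i) ≤ γ i / Real.sqrt m :=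
        div_le_div_of_nonneg_left (hγ i) hsm hrm' |>.trans_eq rfl
      calc (γ i / Real.sqrt (r i)) * t i ≤ (γ i / Real.sqrt m) * t i :=
            mul_le_mul_of_nonneg_right h2 h.le
        _ ≤ (γ i / Real.sqrt m) * (Real.sqrt k * g i) :=
            mul_le_mul_of_nonneg_left h1 (div_nonneg (hγ i) (Real.sqrt_nonneg _))
        _ = (Real.sqrt k / Real.sqrt m) * (γ i * g i) := by ring
  -- final chain
  rw [hlhs]
  have hcs : ∑ i, γ i * g i
      ≤ Real.sqrt (∑ i, γ i ^ 2) * Real.sqrt (∑ i, g i ^ 2) :=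
    Real.sum_mul_le_sqrt_mul_sqrt _ _ _
  have hfinal : ∑ i, (γ i / Real.sqrt (r i)) * t i
      ≤ (Real.sqrt k / Real.sqrt m) *
        (Real.sqrt (∑ i, γ i ^ 2) * Real.sqrt (∑ l, ‖S (u l)‖ ^ 2)) := by
    calc ∑ i, (γ i / Real.sqrt (r i)) * t i
        ≤ ∑ i, (Real.sqrt k / Real.sqrt m) * (γ i * g i) :=
          Finset.sum_le_sum fun i _ => hper i
      _ = (Real.sqrt k / Real.sqrt m) * ∑ i, γ i * g i := by rw [Finset.mul_sum]
      _ ≤ (Real.sqrt k / Real.sqrt m) *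
          (Real.sqrt (∑ i, γ i ^ 2) * Real.sqrt (∑ i, g i ^ 2)) := by
          exact mul_le_mul_of_nonneg_left hcs
            (div_nonneg (Real.sqrt_nonneg _) (Real.sqrt_nonneg _))
      _ ≤ (Real.sqrt k / Real.sqrt m) *
          (Real.sqrt (∑ i, γ i ^ 2) * Real.sqrt (∑ l, ‖S (u l)‖ ^ 2)) := by
          have := Real.sqrt_le_sqrt hgsum
          have h0 : 0 ≤ Real.sqrt k / Real.sqrt m :=
            div_nonneg (Real.sqrt_nonneg _) (Real.sqrt_nonneg _)
          exact mul_le_mul_of_nonneg_left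
            (mul_le_mul_of_nonneg_left this (Real.sqrt_nonneg _)) h0
  refine hfinal.trans_eq ?_
  rw [htsumS, Real.sqrt_div (by positivity) (m : ℝ)]
  ring
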